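/- \sum_{k=0}^\infty binom(2k,k) / 16^k * (H_{2k}^{(2)} - (1/4) H_k^{(2)}) = \pi^2 / (36 sqrt(3)). -/

import Mathlib

open Real Set

noncomputable def cc (k : ℕ) : ℝ := (Nat.choose (2 * k) k : ℝ) / 4 ^ k
noncomputable def hh (k : ℕ) : ℝ := ∑ i ∈ Finset.range k, (1 : ℝ) / (2 * (i : ℝ) + 1) ^ 2
noncomputable def dd (k : ℕ) : ℝ := 2 * cc k * hh k

lemma cc_zero : cc 0 = 1 := by simp [cc]

lemma cc_pos (k : ℕ) : 0 < cc k := by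
  have : 0 < Nat.choose (2 * k) k := Nat.choose_pos (by omega)
  have h2 : (0:ℝ) < Nat.choose (2 * k) k := by exact_mod_cast this
  have h4 : (0:ℝ) < 4 ^ k := by positivity
  exact div_pos h2 h4

lemma cc_rec (k : ℕ) : (2 * (k:ℝ) + 2) * cc (k + 1) = (2 * (k:ℝ) + 1) * cc k := by
  have h := Nat.succ_mul_centralBinom_succ k
  simp only [Nat.centralBinom] at h
  have h' : ((k:ℝ) + 1) * (Nat.choose (2 * (k+1)) (k+1) : ℝ)
      = 2 * (2 * (k:ℝ) + 1) * (Nat.choose (2 * k) k : ℝ) := by exact_mod_cast h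
  have h4 : (4:ℝ) ^ k ≠ 0 := by positivity
  have hk1 : ((k:ℝ) + 1) ≠ 0 := by positivity
  simp only [cc, pow_succ]
  field_simp
  linear_combination 2 * h'

lemma cc_succ (k : ℕ) : cc (k + 1) = (2 * (k:ℝ) + 1) / (2 * (k:ℝ) + 2) * cc k := by
  have h := cc_rec k
  have h2 : (2 * (k:ℝ) + 2) ≠ 0 := by positivity
  field_simp
  linarith [h]

lemma cc_le_one (k : ℕ) : cc k ≤ 1 := by
  induction k with
  | zero => simp [cc_zero]
  | succ n ih =>
    rw [cc_succ]
    have h1 : (2 * (n:ℝ) + 1) / (2 * (n:ℝ) + 2) ≤ 1 := by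
      rw [div_le_one (by positivity)]; linarith
    have := cc_pos n
    nlinarith

lemma hh_zero : hh 0 = 0 := by simp [hh]

lemma hh_succ (k : ℕ) : hh (k + 1) = hh k + 1 / (2 * (k:ℝ) + 1) ^ 2 := by
  simp [hh, Finset.sum_range_succ]

lemma hh_nonneg (k : ℕ) : 0 ≤ hh k := by
  unfold hh; positivity

lemma hh_le_aux (k : ℕ) : hh k ≤ 2 - 2 / (2 * (k:ℝ) + 1) := by
  induction k with
  | zero => simp [hh_zero]
  | succ n ih =>
    rw [hh_succ]
    push_cast
    have h1 : (0:ℝ) < 2 * (n:ℝ) + 1 := by positivity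
    have h3 : (0:ℝ) < 2 * (n:ℝ) + 3 := by positivity
    have key : 1 / (2 * (n:ℝ) + 1) ^ 2 + 2 / (2 * ((n:ℝ) + 1) + 1) ≤ 2 / (2 * (n:ℝ) + 1) := by
      rw [div_add_div _ _ (by positivity) (by positivity), div_le_div_iff₀ (by positivity) (by positivity)]
      nlinarith
    linarith
section Machinery
variable {b : ℕ → ℝ} {C : ℝ} {e : ℕ → ℕ}

lemma pow_bound {y : ℝ} (hy : |y| ≤ 3/4) (m n : ℕ) (hmn : m ≤ n) :
    |y| ^ n ≤ (3/4 : ℝ) ^ m := by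
  calc |y| ^ n ≤ (3/4:ℝ) ^ n := pow_le_pow_left₀ (abs_nonneg y) hy n
    _ ≤ (3/4:ℝ) ^ m := pow_le_pow_of_le_one (by norm_num) (by norm_num) hmn

lemma summable_U (C : ℝ) : Summable (fun k : ℕ => 4 * C * (2 * (k:ℝ) + 2) * (3/4) ^ k) := by
  have h1 : Summable (fun k : ℕ => (k:ℝ) ^ 1 * (3/4) ^ k) :=
    summable_pow_mul_geometric_of_norm_lt_one 1 (by rw [Real.norm_eq_abs, abs_of_pos] <;> norm_num)
  have h2 : Summable (fun k : ℕ => (3/4 : ℝ) ^ k) := summable_geometric_of_lt_one (by norm_num) (by norm_num)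
  have := ((h1.mul_left (8 * C)).add (h2.mul_left (8 * C)))
  apply this.congr
  intro k; push_cast; ring

lemma summable_main (hb : ∀ k, |b k| ≤ C) (he1 : ∀ k, k ≤ e k) {x : ℝ} (hx : |x| ≤ 3/4) :
    Summable fun k => b k * x ^ (e k) := by
  have h2 : Summable (fun k : ℕ => C * (3/4 : ℝ) ^ k) :=
    (summable_geometric_of_lt_one (by norm_num) (by norm_num)).mul_left C
  apply Summable.of_norm_bounded h2
  intro k
  rw [norm_mul, norm_pow, Real.norm_eq_abs, Real.norm_eq_abs]
  calc |b k| * |x| ^ (e k) ≤ C * (3/4) ^ k := by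
        apply mul_le_mul (hb k) (pow_bound hx k (e k) (he1 k)) (by positivity)
        exact le_trans (abs_nonneg _) (hb k)

lemma deriv_term_bound (hb : ∀ k, |b k| ≤ C) (he1 : ∀ k, k ≤ e k) (he2 : ∀ k, e k ≤ 2*k+1)
    {y : ℝ} (hy : |y| ≤ 3/4) (k : ℕ) :
    ‖b k * ((e k : ℝ) * y ^ (e k - 1))‖ ≤ 4 * C * (2 * (k:ℝ) + 2) * (3/4) ^ k := by
  have hC : 0 ≤ C := le_trans (abs_nonneg _) (hb 0)
  rw [Real.norm_eq_abs, abs_mul, abs_mul, abs_pow, Nat.abs_cast]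
  have h1 : |y| ^ (e k - 1) ≤ 4 * (3/4 : ℝ) ^ k := by
    calc |y| ^ (e k - 1) ≤ (3/4:ℝ) ^ (k - 1) := pow_bound hy (k-1) (e k - 1) (by have := he1 k; omega)
      _ ≤ 4 * (3/4:ℝ) ^ k := by
          rcases Nat.eq_zero_or_pos k with h | h
          · subst h; norm_num
          · have hpk : (3/4:ℝ)^k = (3/4)^(k-1) * (3/4) := by
              rw [← pow_succ]; congr 1; omega
            nlinarith [pow_pos (show (0:ℝ) < 3/4 by norm_num) (k-1)]
  have h2 : ((e k : ℝ)) ≤ 2 * (k:ℝ) + 2 := by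
    have h : ((e k : ℕ) : ℝ) ≤ ((2*k+1 : ℕ) : ℝ) := Nat.cast_le.mpr (he2 k)
    push_cast at h; linarith
  calc |b k| * ((e k : ℝ) * |y| ^ (e k - 1))
      ≤ C * ((2 * (k:ℝ) + 2) * (4 * (3/4) ^ k)) := by
        apply mul_le_mul (hb k) _ (by positivity) hC
        apply mul_le_mul h2 h1 (by positivity) (by positivity)
    _ = 4 * C * (2 * (k:ℝ) + 2) * (3/4) ^ k := by ring

lemma hasDerivAt_tsum_pow (hb : ∀ k, |b k| ≤ C) (he1 : ∀ k, k ≤ e k) (he2 : ∀ k, e k ≤ 2*k+1)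
    {x : ℝ} (hx : x ∈ Ioo (-(3/4) : ℝ) (3/4)) :
    HasDerivAt (fun z => ∑' k, b k * z ^ (e k)) (∑' k, b k * ((e k : ℝ) * x ^ (e k - 1))) x := by
  apply hasDerivAt_tsum_of_isPreconnected (summable_U C) isOpen_Ioo
    (convex_Ioo _ _).isPreconnected
    (g := fun k z => b k * z ^ (e k)) (g' := fun k y => b k * ((e k : ℝ) * y ^ (e k - 1)))
    (y₀ := 0)
  · intro k y _
    exact (hasDerivAt_pow (e k) y).const_mul (b k)
  · intro k y hy
    have : |y| ≤ 3/4 := by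
      rw [abs_le]; exact ⟨(hy.1).le, (hy.2).le⟩
    exact deriv_term_bound hb he1 he2 this k
  · exact ⟨by norm_num, by norm_num⟩
  · apply summable_of_ne_finset_zero (s := {0})
    intro k hk
    simp only [Finset.mem_singleton] at hk
    have : 0 < e k := lt_of_lt_of_le (Nat.pos_of_ne_zero hk) (he1 k)
    rw [zero_pow (by omega), mul_zero]
  · exact hx

end Machinery

lemma ode_tsum (b : ℕ → ℝ) (x : ℝ)
    (hD : Summable fun k => b k * (((2*k : ℕ) : ℝ) * x ^ (2*k - 1)))
    (hF : Summable fun k => b k * x ^ (2*k)) :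
    (1 - x^2) * (∑' k, b k * (((2*k : ℕ):ℝ) * x ^ (2*k-1))) - x * ∑' k, b k * x ^ (2*k)
      = ∑' k : ℕ, ((2*(k:ℝ)+2) * b (k+1) - (2*(k:ℝ)+1) * b k) * x ^ (2*k+1) := by
  -- shifted version of the derivative sum
  have hDs : Summable fun k => b (k+1) * ((2*(k:ℝ)+2) * x ^ (2*k+1)) := by
    have h := (summable_nat_add_iff 1).mpr hD
    apply h.congr
    intro k
    have : 2 * (k+1) - 1 = 2*k+1 := by omega
    rw [this]; push_cast; ring
  have h1 : (∑' k, b k * (((2*k : ℕ):ℝ) * x ^ (2*k-1)))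
      = ∑' k, b (k+1) * ((2*(k:ℝ)+2) * x ^ (2*k+1)) := by
    rw [Summable.tsum_eq_zero_add hD]
    simp only [Nat.mul_zero, Nat.cast_zero, zero_mul, mul_zero, zero_add]
    apply tsum_congr
    intro k
    have : 2 * (k+1) - 1 = 2*k+1 := by omega
    rw [this]; push_cast; ring
  -- x^2 * derivative sum
  have hterm : ∀ k : ℕ, x^2 * (b k * (((2*k : ℕ):ℝ) * x ^ (2*k-1)))
      = b k * ((2*(k:ℝ)) * x ^ (2*k+1)) := by
    intro k
    cases k with
    | zero => simp
    | succ n =>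
      have h1 : 2 * (n+1) - 1 = 2*n+1 := by omega
      have h2 : 2 * (n+1) + 1 = (2*n+1) + 2 := by omega
      rw [h1, h2]; push_cast; ring
  have hE : Summable fun k => b k * ((2*(k:ℝ)) * x ^ (2*k+1)) :=
    (hD.mul_left (x^2)).congr hterm
  have h2 : x^2 * (∑' k, b k * (((2*k : ℕ):ℝ) * x ^ (2*k-1)))
      = ∑' k, b k * ((2*(k:ℝ)) * x ^ (2*k+1)) := by
    rw [← tsum_mul_left]
    exact tsum_congr hterm
  have hG : Summable fun k => b k * x ^ (2*k+1) := by
    apply (hF.mul_left x).congr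
    intro k; rw [pow_succ]; ring
  have h3 : x * (∑' k, b k * x ^ (2*k)) = ∑' k, b k * x ^ (2*k+1) := by
    rw [← tsum_mul_left]
    apply tsum_congr; intro k; rw [pow_succ]; ring
  have lhs_eq : (1 - x^2) * (∑' k, b k * (((2*k : ℕ):ℝ) * x ^ (2*k-1))) - x * ∑' k, b k * x ^ (2*k)
      = (∑' k, b (k+1) * ((2*(k:ℝ)+2) * x ^ (2*k+1)))
        - (∑' k, b k * ((2*(k:ℝ)) * x ^ (2*k+1)))
        - ∑' k, b k * x ^ (2*k+1) := by
    rw [← h2, ← h3, ← h1]; ring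
  rw [lhs_eq, ← Summable.tsum_sub hDs hE, ← Summable.tsum_sub (hDs.sub hE) hG]
  apply tsum_congr
  intro k
  ring

lemma const_of_hasDerivAt_zero {f : ℝ → ℝ}
    (h : ∀ x ∈ Set.Ioo (-(3/4) : ℝ) (3/4), HasDerivAt f 0 x)
    {x : ℝ} (hx : x ∈ Set.Ioo (-(3/4) : ℝ) (3/4)) : f x = f 0 := by
  apply (convex_Ioo (-(3/4) : ℝ) (3/4)).is_const_of_fderivWithin_eq_zero
    (𝕜 := ℝ) (fun z hz => (h z hz).differentiableAt.differentiableWithinAt) _ hx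
    (by constructor <;> norm_num)
  intro z hz
  rw [fderivWithin_of_isOpen isOpen_Ioo hz, (h z hz).hasFDerivAt.fderiv]
  ext y
  simp

noncomputable def aa (k : ℕ) : ℝ := cc k / (2 * (k:ℝ) + 1)

noncomputable def FF (x : ℝ) : ℝ := ∑' k, cc k * x ^ (2*k)
noncomputable def AA (x : ℝ) : ℝ := ∑' k, aa k * x ^ (2*k+1)
noncomputable def GG (x : ℝ) : ℝ := ∑' k, dd k * x ^ (2*k)

lemma hh_le_two (k : ℕ) : hh k ≤ 2 := by
  have h := hh_le_aux k
  have : (0:ℝ) < 2 * (k:ℝ) + 1 := by positivity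
  have : 0 ≤ 2 / (2 * (k:ℝ) + 1) := by positivity
  linarith

lemma abs_cc_le (k : ℕ) : |cc k| ≤ 1 := by
  rw [abs_of_pos (cc_pos k)]; exact cc_le_one k

lemma abs_dd_le (k : ℕ) : |dd k| ≤ 4 := by
  have h1 := cc_pos k
  have h2 := cc_le_one k
  have h3 := hh_nonneg k
  have h4 := hh_le_two k
  rw [dd, abs_of_nonneg (by positivity)]
  nlinarith

lemma abs_aa_le (k : ℕ) : |aa k| ≤ 1 := by
  have h1 := cc_pos k
  have h2 := cc_le_one k
  have h3 : (1:ℝ) ≤ 2 * (k:ℝ) + 1 := by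
    have : (0:ℝ) ≤ (k:ℝ) := Nat.cast_nonneg k
    linarith
  rw [aa, abs_of_nonneg (by positivity), div_le_one (by positivity)]
  linarith

lemma mem_abs {x : ℝ} (hx : x ∈ Set.Ioo (-(3/4) : ℝ) (3/4)) : |x| ≤ 3/4 := by
  rw [abs_le]; exact ⟨hx.1.le, hx.2.le⟩

-- derivative of FF
lemma hasDerivAt_FF {x : ℝ} (hx : x ∈ Set.Ioo (-(3/4) : ℝ) (3/4)) :
    HasDerivAt FF (∑' k, cc k * (((2*k : ℕ) : ℝ) * x ^ (2*k - 1))) x :=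
  hasDerivAt_tsum_pow abs_cc_le (fun k => by omega) (fun k => by omega) hx

lemma hasDerivAt_GG {x : ℝ} (hx : x ∈ Set.Ioo (-(3/4) : ℝ) (3/4)) :
    HasDerivAt GG (∑' k, dd k * (((2*k : ℕ) : ℝ) * x ^ (2*k - 1))) x :=
  hasDerivAt_tsum_pow abs_dd_le (fun k => by omega) (fun k => by omega) hx

lemma hasDerivAt_AA {x : ℝ} (hx : x ∈ Set.Ioo (-(3/4) : ℝ) (3/4)) :
    HasDerivAt AA (FF x) x := by
  have h := hasDerivAt_tsum_pow (b := aa) (e := fun k => 2*k+1) abs_aa_le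
    (fun k => by show k ≤ 2*k+1; omega) (fun k => by show 2*k+1 ≤ 2*k+1; omega) hx
  refine h.congr_deriv (Eq.symm ?_)
  rw [FF]
  apply tsum_congr
  intro k
  have : 2*k+1-1 = 2*k := by omega
  rw [this, aa]
  have hne : (2 * (k:ℝ) + 1) ≠ 0 := by positivity
  push_cast
  field_simp

lemma summable_derivS {b : ℕ → ℝ} {C : ℝ} {e : ℕ → ℕ} (hb : ∀ k, |b k| ≤ C)
    (he1 : ∀ k, k ≤ e k) (he2 : ∀ k, e k ≤ 2*k+1) {x : ℝ} (hx : |x| ≤ 3/4) :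
    Summable fun k => b k * ((e k : ℝ) * x ^ (e k - 1)) :=
  Summable.of_norm_bounded (summable_U C) (fun k => deriv_term_bound hb he1 he2 hx k)

lemma hasDerivAt_sqrt_one_sub_sq {x : ℝ} (h1 : 0 < 1 - x^2) :
    HasDerivAt (fun y : ℝ => Real.sqrt (1 - y^2)) (-x / Real.sqrt (1 - x^2)) x := by
  have hinner : HasDerivAt (fun y : ℝ => 1 - y^2) (-(2*x)) x := by
    have := (hasDerivAt_pow 2 x).const_sub 1
    simpa using this
  have hs := (Real.hasDerivAt_sqrt (ne_of_gt h1)).comp x hinner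
  refine hs.congr_deriv (Eq.symm ?_)
  have hpos : 0 < Real.sqrt (1 - x^2) := Real.sqrt_pos.mpr h1
  field_simp

lemma FF_zero : FF 0 = 1 := by
  rw [FF, tsum_eq_single 0 (fun k hk => by
    rw [zero_pow (by omega : 2*k ≠ 0), mul_zero])]
  simp [cc_zero]

lemma AA_zero : AA 0 = 0 := by
  rw [AA]
  have : ∀ k : ℕ, aa k * (0:ℝ) ^ (2*k+1) = 0 := fun k => by
    rw [zero_pow (by omega : 2*k+1 ≠ 0), mul_zero]
  rw [tsum_congr this, tsum_zero]

lemma GG_zero : GG 0 = 0 := by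
  rw [GG, tsum_eq_single 0 (fun k hk => by
    rw [zero_pow (by omega : 2*k ≠ 0), mul_zero])]
  simp [dd, hh_zero]

lemma one_sub_sq_pos {x : ℝ} (hx : x ∈ Set.Ioo (-(3/4) : ℝ) (3/4)) : 0 < 1 - x^2 := by
  have h1 := hx.1; have h2 := hx.2; nlinarith

lemma sqrt_mul_FF {x : ℝ} (hx : x ∈ Set.Ioo (-(3/4) : ℝ) (3/4)) :
    Real.sqrt (1 - x^2) * FF x = 1 := by
  have key : ∀ y ∈ Set.Ioo (-(3/4) : ℝ) (3/4),
      HasDerivAt (fun z => Real.sqrt (1 - z^2) * FF z) 0 y := by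
    intro y hy
    have h1 : 0 < 1 - y^2 := one_sub_sq_pos hy
    have hprod := (hasDerivAt_sqrt_one_sub_sq h1).mul (hasDerivAt_FF hy)
    refine hprod.congr_deriv (Eq.symm ?_)
    have hD := ode_tsum cc y
      (summable_derivS abs_cc_le (fun k => by omega) (fun k => by omega) (mem_abs hy))
      (summable_main abs_cc_le (fun k => by omega) (mem_abs hy))
    have hzero : ∑' k:ℕ, ((2*(k:ℝ)+2) * cc (k+1) - (2*(k:ℝ)+1) * cc k) * y^(2*k+1) = 0 := by
      have : ∀ k:ℕ, ((2*(k:ℝ)+2) * cc (k+1) - (2*(k:ℝ)+1) * cc k) * y^(2*k+1) = 0 := by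
        intro k; rw [cc_rec]; ring
      rw [tsum_congr this, tsum_zero]
    rw [hzero] at hD
    have hsq : Real.sqrt (1-y^2) * Real.sqrt (1-y^2) = 1 - y^2 := Real.mul_self_sqrt h1.le
    have hpos : 0 < Real.sqrt (1-y^2) := Real.sqrt_pos.mpr h1
    set D := ∑' k, cc k * (((2*k:ℕ):ℝ) * y^(2*k-1)) with hDdef
    show (0:ℝ) = -y / Real.sqrt (1-y^2) * FF y + Real.sqrt (1-y^2) * D
    rw [show FF y = ∑' k, cc k * y ^ (2*k) from rfl] at *
    field_simp
    linear_combination (-1) * hD - D * hsq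
  have h := const_of_hasDerivAt_zero key hx
  simpa [FF_zero] using h

lemma FF_eq {x : ℝ} (hx : x ∈ Set.Ioo (-(3/4) : ℝ) (3/4)) :
    FF x = 1 / Real.sqrt (1 - x^2) := by
  have h1 := one_sub_sq_pos hx
  have hpos : 0 < Real.sqrt (1-x^2) := Real.sqrt_pos.mpr h1
  have h := sqrt_mul_FF hx
  field_simp
  linarith [h]

lemma ne_one_abs {x : ℝ} (hx : x ∈ Set.Ioo (-(3/4) : ℝ) (3/4)) : x ≠ -1 ∧ x ≠ 1 := by
  constructor <;> rintro rfl <;> [exact absurd hx.1 (by norm_num); exact absurd hx.2 (by norm_num)]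

lemma AA_eq_arcsin {x : ℝ} (hx : x ∈ Set.Ioo (-(3/4) : ℝ) (3/4)) :
    AA x = Real.arcsin x := by
  have key : ∀ y ∈ Set.Ioo (-(3/4) : ℝ) (3/4),
      HasDerivAt (fun z => AA z - Real.arcsin z) 0 y := by
    intro y hy
    have hne := ne_one_abs hy
    have ha := Real.hasDerivAt_arcsin hne.1 hne.2
    have hd := (hasDerivAt_AA hy).sub ha
    refine hd.congr_deriv (Eq.symm ?_)
    rw [FF_eq hy]
    ring
  have h := const_of_hasDerivAt_zero key hx
  simp only [AA_zero, Real.arcsin_zero, sub_zero] at h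
  linarith [h]

lemma dd_rec (k : ℕ) : (2*(k:ℝ)+2) * dd (k+1) - (2*(k:ℝ)+1) * dd k = 2 * aa k := by
  have hcs := cc_succ k
  have h1 : (2*(k:ℝ)+1) ≠ 0 := by positivity
  have h2 : (2*(k:ℝ)+2) ≠ 0 := by positivity
  rw [dd, dd, aa, hh_succ, hcs]
  field_simp
  ring

lemma sqrt_mul_GG {x : ℝ} (hx : x ∈ Set.Ioo (-(3/4) : ℝ) (3/4)) :
    Real.sqrt (1 - x^2) * GG x = Real.arcsin x ^ 2 := by
  have key : ∀ y ∈ Set.Ioo (-(3/4) : ℝ) (3/4),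
      HasDerivAt (fun z => Real.sqrt (1 - z^2) * GG z - Real.arcsin z ^ 2) 0 y := by
    intro y hy
    have h1 : 0 < 1 - y^2 := one_sub_sq_pos hy
    have hne := ne_one_abs hy
    have ha := Real.hasDerivAt_arcsin hne.1 hne.2
    have hprod := ((hasDerivAt_sqrt_one_sub_sq h1).mul (hasDerivAt_GG hy)).sub (ha.pow 2)
    refine hprod.congr_deriv (Eq.symm ?_)
    have hD := ode_tsum dd y
      (summable_derivS abs_dd_le (fun k => by omega) (fun k => by omega) (mem_abs hy))
      (summable_main abs_dd_le (fun k => by omega) (mem_abs hy))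
    have hA : ∑' k:ℕ, ((2*(k:ℝ)+2) * dd (k+1) - (2*(k:ℝ)+1) * dd k) * y^(2*k+1)
        = 2 * Real.arcsin y := by
      have hcong : ∀ k:ℕ, ((2*(k:ℝ)+2) * dd (k+1) - (2*(k:ℝ)+1) * dd k) * y^(2*k+1)
          = 2 * (aa k * y^(2*k+1)) := by
        intro k; rw [dd_rec]; ring
      rw [tsum_congr hcong, tsum_mul_left, ← AA, AA_eq_arcsin hy]
    rw [hA] at hD
    have hsq : Real.sqrt (1-y^2) * Real.sqrt (1-y^2) = 1 - y^2 := Real.mul_self_sqrt h1.le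
    have hpos : 0 < Real.sqrt (1-y^2) := Real.sqrt_pos.mpr h1
    set D := ∑' k, dd k * (((2*k:ℕ):ℝ) * y^(2*k-1)) with hDdef
    show (0:ℝ) = -y / Real.sqrt (1-y^2) * GG y + Real.sqrt (1-y^2) * D
      - (2:ℕ) * Real.arcsin y ^ (2-1) * (1 / Real.sqrt (1-y^2))
    rw [show GG y = ∑' k, dd k * y ^ (2*k) from rfl] at *
    push_cast
    field_simp
    linear_combination (-1) * hD - D * hsq
  have h := const_of_hasDerivAt_zero key hx
  simp only [GG_zero, Real.arcsin_zero] at h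
  norm_num at h
  linarith [h]

lemma icc_eq (k : ℕ) :
    (∑ j ∈ Finset.Icc 1 (2 * k), (1 : ℝ) / (j : ℝ) ^ 2) -
      (1 / 4) * ∑ j ∈ Finset.Icc 1 k, (1 : ℝ) / (j : ℝ) ^ 2 = hh k := by
  induction k with
  | zero => simp [hh_zero]
  | succ n ih =>
    rw [show 2*(n+1) = (2*n+1)+1 from by omega,
      Finset.sum_Icc_succ_top (by omega : 1 ≤ (2*n+1)+1),
      Finset.sum_Icc_succ_top (by omega : 1 ≤ 2*n+1),
      Finset.sum_Icc_succ_top (by omega : 1 ≤ n+1),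
      hh_succ, ← ih]
    push_cast
    have h1 : ((n:ℝ)+1) ≠ 0 := by positivity
    have h2 : (2*(n:ℝ)+1) ≠ 0 := by positivity
    have h3 : (2*(n:ℝ)+2) ≠ 0 := by positivity
    field_simp
    ring

lemma summand_eq (k : ℕ) :
    (Nat.choose (2*k) k : ℝ) / 16^k * hh k = dd k * (1/2:ℝ)^(2*k) / 2 := by
  rw [dd, cc]
  have h1 : ((1:ℝ)/2)^(2*k) = 1/4^k := by
    rw [pow_mul]; norm_num; rw [one_div, inv_pow]
  have h16 : (16:ℝ)^k = 4^k * 4^k := by rw [← mul_pow]; norm_num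
  rw [h1, h16]
  have h4 : (4:ℝ)^k ≠ 0 := by positivity
  field_simp

theorem sum_central_binom_harmonic2_16pow :
    ∑' k : ℕ,
        (Nat.choose (2 * k) k : ℝ) / 16 ^ k *
          ((∑ j ∈ Finset.Icc 1 (2 * k), (1 : ℝ) / (j : ℝ) ^ 2) -
            (1 / 4) * ∑ j ∈ Finset.Icc 1 k, (1 : ℝ) / (j : ℝ) ^ 2) =
      Real.pi ^ 2 / (36 * Real.sqrt 3) := by
  have hhalf : (1/2:ℝ) ∈ Set.Ioo (-(3/4):ℝ) (3/4) := by norm_num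
  have hG := sqrt_mul_GG hhalf
  have harc : Real.arcsin (1/2) = π/6 := by
    apply Real.arcsin_eq_of_sin_eq Real.sin_pi_div_six
    constructor <;> [linarith [Real.pi_pos]; linarith [Real.pi_pos]]
  have hsq : Real.sqrt (1 - (1/2:ℝ)^2) = Real.sqrt 3 / 2 := by
    rw [show (1 - (1/2:ℝ)^2) = 3/4 by norm_num]
    rw [Real.sqrt_div (by norm_num : (0:ℝ) ≤ 3) 4]
    rw [show (4:ℝ) = 2^2 by norm_num, Real.sqrt_sq (by norm_num : (0:ℝ) ≤ 2)]
  rw [hsq, harc] at hG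
  have hstep : ∑' k : ℕ,
        (Nat.choose (2 * k) k : ℝ) / 16 ^ k *
          ((∑ j ∈ Finset.Icc 1 (2 * k), (1 : ℝ) / (j : ℝ) ^ 2) -
            (1 / 4) * ∑ j ∈ Finset.Icc 1 k, (1 : ℝ) / (j : ℝ) ^ 2)
      = ∑' k : ℕ, dd k * (1/2:ℝ)^(2*k) / 2 := by
    apply tsum_congr
    intro k
    rw [icc_eq k, summand_eq k]
  rw [hstep, tsum_div_const]
  have hGG : (∑' k : ℕ, dd k * (1/2:ℝ)^(2*k)) = GG (1/2) := rfl
  rw [hGG]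
  have h3 : (0:ℝ) < Real.sqrt 3 := Real.sqrt_pos.mpr (by norm_num)
  rw [eq_div_iff (by positivity : (36:ℝ) * Real.sqrt 3 ≠ 0)]
  linear_combination 36 * hG
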